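/- Let n be a positive integer and let H ∈ M_n(ℝ) be a symmetric positive definite matrix with nonpositive off-diagonal entries. Then for any indices 1 ≤ i, j ≤ n, one has H^{-1}(i,j) > 0 if and only if i and j are H-connected. -/

import Mathlib

open Matrix

/-- Indices i and j are H-connected. -/
def HConnected {n : ℕ} (H : Matrix (Fin n) (Fin n) ℝ) (i j : Fin n) : Prop :=
  Relation.ReflTransGen (fun a b => H a b ≠ 0) i j

/-- Entrywise nonnegativity of the inverse of a Stieltjes matrix. -/
lemma stieltjes_inv_nonneg {n : ℕ} (H : Matrix (Fin n) (Fin n) ℝ)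
    (hpd : H.PosDef) (hoff : ∀ i j : Fin n, i ≠ j → H i j ≤ 0) (a b : Fin n) :
    0 ≤ H⁻¹ a b := by
  classical
  set x : Fin n → ℝ := fun k => H⁻¹ k b with hx
  have hinv : H * H⁻¹ = 1 := Matrix.mul_nonsing_inv H hpd.det_pos.ne'.isUnit
  have hHx : H.mulVec x = Pi.single b 1 := by
    funext a
    have := congrFun (congrFun hinv a) b
    simpa [Matrix.mulVec, Matrix.mul_apply, dotProduct, Matrix.one_apply,
      Pi.single_apply, eq_comm] using this
  set xm : Fin n → ℝ := fun k => max (-(x k)) 0 with hxm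
  set xp : Fin n → ℝ := fun k => max (x k) 0 with hxp
  have hsplit : ∀ k, xm k = xp k - x k := by
    intro k
    rcases le_total (x k) 0 with h | h
    · show max (-(x k)) 0 = max (x k) 0 - x k
      rw [max_eq_left (neg_nonneg.2 h), max_eq_right h]; ring
    · show max (-(x k)) 0 = max (x k) 0 - x k
      rw [max_eq_right (neg_nonpos.2 h), max_eq_left h]; ring
  have hxm_nonneg : ∀ k, 0 ≤ xm k := fun k => le_max_right _ _
  have hxp_nonneg : ∀ k, 0 ≤ xp k := fun k => le_max_right _ _
  have hdisj : ∀ k, xm k * xp k = 0 := by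
    intro k
    rcases le_total (x k) 0 with h | h
    · simp [hxp, max_eq_right h]
    · simp [hxm, max_eq_right (neg_nonpos.2 h)]
  -- the cross term is nonpositive
  have hcross : xm ⬝ᵥ H.mulVec xp ≤ 0 := by
    have : ∀ k ∈ Finset.univ, xm k * (H.mulVec xp) k ≤ 0 := by
      intro k _
      have : ∀ l ∈ Finset.univ, xm k * (H k l * xp l) ≤ 0 := by
        intro l _
        rcases eq_or_ne k l with rfl | hkl
        · have h0 : xm k * (H k k * xp k) = H k k * (xm k * xp k) := by ring
          rw [h0, hdisj k, mul_zero]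
        · have h1 := hoff k l hkl
          have := mul_nonneg (hxm_nonneg k) (hxp_nonneg l)
          nlinarith
      calc xm k * (H.mulVec xp) k = ∑ l, xm k * (H k l * xp l) := by
            simp [Matrix.mulVec, dotProduct, Finset.mul_sum]
        _ ≤ 0 := Finset.sum_nonpos this
    calc xm ⬝ᵥ H.mulVec xp = ∑ k, xm k * (H.mulVec xp) k := rfl
      _ ≤ 0 := Finset.sum_nonpos this
  have hterm2 : xm ⬝ᵥ H.mulVec x = xm b := by
    rw [hHx, dotProduct_single, mul_one]
  have hxm_eq : xm = xp - x := funext fun k => by simpa using hsplit k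
  have hquad : xm ⬝ᵥ H.mulVec xm ≤ 0 := by
    have : xm ⬝ᵥ H.mulVec xm = xm ⬝ᵥ H.mulVec xp - xm ⬝ᵥ H.mulVec x := by
      rw [hxm_eq, Matrix.mulVec_sub, dotProduct_sub]
    rw [this, hterm2]
    have : 0 ≤ xm b := hxm_nonneg b
    linarith
  have hxm_zero : xm = 0 := by
    by_contra h
    have := hpd.dotProduct_mulVec_pos h
    simp only [star_trivial] at this
    linarith
  have : 0 ≤ x a := by
    have := congrFun hxm_zero a
    simp only [hxm, Pi.zero_apply] at this
    have : -(x a) ≤ 0 := le_of_max_le_left (le_of_eq this)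
    linarith
  exact this

/-- for a symmetric positive definite matrix with nonpositive
off-diagonal entries, `H⁻¹ i j > 0` iff `i` and `j` are `H`-connected. -/
theorem stmt2 {n : ℕ} (hn : 0 < n) (H : Matrix (Fin n) (Fin n) ℝ)
    (hsymm : H.IsSymm) (hpd : H.PosDef)
    (hoff : ∀ i j : Fin n, i ≠ j → H i j ≤ 0) (i j : Fin n) :
    0 < H⁻¹ i j ↔ HConnected H i j := by
  classical
  have hinv : H * H⁻¹ = 1 := Matrix.mul_nonsing_inv H hpd.det_pos.ne'.isUnit
  have hinv_nonneg : ∀ a b, 0 ≤ H⁻¹ a b := stieltjes_inv_nonneg H hpd hoff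
  -- symmetry of the adjacency relation
  have hadj_symm : ∀ a b : Fin n, H a b ≠ 0 → H b a ≠ 0 := by
    intro a b hab
    have := congrFun (congrFun hsymm a) b
    simp only [Matrix.transpose_apply] at this
    rw [this]; exact hab
  constructor
  · -- if not connected, the inverse entry is 0
    intro hpos
    by_contra hcon
    set P : Fin n → Prop := fun k => HConnected H i k with hP
    have hPrespects : ∀ a k : Fin n, H a k ≠ 0 → (P a ↔ P k) := by
      intro a k hak
      constructor
      · intro h; exact h.tail hak
      · intro h; exact h.tail (hadj_symm a k hak)
    set M : Matrix (Fin n) (Fin n) ℝ :=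
      fun a b => if P a ↔ P b then H⁻¹ a b else 0 with hM
    have hHM : H * M = 1 := by
      funext a b
      have hterm : ∀ k, H a k * M k b = H a k * (if P a ↔ P b then H⁻¹ k b else 0) := by
        intro k
        rcases eq_or_ne (H a k) 0 with h | h
        · simp [h]
        · have := hPrespects a k h
          simp only [hM]
          congr 1
          by_cases hb : P a ↔ P b
          · rw [if_pos hb, if_pos (this.symm.trans hb)]
          · rw [if_neg hb, if_neg (fun hkb => hb (this.trans hkb))]
      have : (H * M) a b = if P a ↔ P b then (H * H⁻¹) a b else 0 := by
        simp only [Matrix.mul_apply, hterm]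
        by_cases hb : P a ↔ P b
        · simp [hb]
        · simp [hb]
      rw [this, hinv]
      by_cases hab : a = b
      · subst hab; simp
      · simp [Matrix.one_apply, hab]
    have hMinv : H⁻¹ = M := Matrix.inv_eq_right_inv hHM
    have : H⁻¹ i j = 0 := by
      rw [hMinv]
      simp only [hM]
      rw [if_neg]
      intro hiff
      exact hcon (hiff.1 Relation.ReflTransGen.refl)
    rw [this] at hpos
    exact lt_irrefl _ hpos
  · -- connected implies positive
    intro hcon
    set s : ℝ := 1 + ∑ a, |H a a| with hs
    have hs_pos : 0 < s := by
      have : (0:ℝ) ≤ ∑ a, |H a a| := Finset.sum_nonneg fun a _ => abs_nonneg _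
      simp only [hs]; linarith
    have hs_ge : ∀ a : Fin n, H a a ≤ s := by
      intro a
      have h1 : |H a a| ≤ ∑ k, |H k k| :=
        Finset.single_le_sum (fun k _ => abs_nonneg (H k k)) (Finset.mem_univ a)
      have := le_abs_self (H a a)
      simp only [hs]; linarith
    set C : Matrix (Fin n) (Fin n) ℝ := 1 - s⁻¹ • H with hC
    have hC_nonneg : ∀ a b, 0 ≤ C a b := by
      intro a b
      simp only [hC, Matrix.sub_apply, Matrix.smul_apply, Matrix.one_apply, smul_eq_mul]
      rcases eq_or_ne a b with rfl | hab
      · rw [if_pos rfl]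
        have := hs_ge a
        have h2 : s⁻¹ * H a a ≤ s⁻¹ * s := by
          apply mul_le_mul_of_nonneg_left this (le_of_lt (inv_pos.2 hs_pos))
        rw [inv_mul_cancel₀ hs_pos.ne'] at h2
        linarith
      · simp only [if_neg hab]
        have := hoff a b hab
        have h2 : s⁻¹ * H a b ≤ 0 :=
          mul_nonpos_of_nonneg_of_nonpos (le_of_lt (inv_pos.2 hs_pos)) this
        linarith
    have hCpow_nonneg : ∀ m : ℕ, ∀ a b, 0 ≤ (C ^ m) a b := by
      intro m
      induction m with
      | zero => intro a b; simp [Matrix.one_apply]; positivity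
      | succ m ih =>
        intro a b
        rw [pow_succ, Matrix.mul_apply]
        exact Finset.sum_nonneg fun k _ => mul_nonneg (ih a k) (hC_nonneg k b)
    set D : Matrix (Fin n) (Fin n) ℝ := s • H⁻¹ with hD
    have hD_nonneg : ∀ a b, 0 ≤ D a b := by
      intro a b
      simp only [hD, Matrix.smul_apply, smul_eq_mul]
      exact mul_nonneg hs_pos.le (hinv_nonneg a b)
    have hCD : C * D = D - 1 := by
      have h1 : (s⁻¹ • H) * (s • H⁻¹) = (1 : Matrix (Fin n) (Fin n) ℝ) := by
        rw [Matrix.smul_mul, Matrix.mul_smul, hinv, smul_smul,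
          inv_mul_cancel₀ hs_pos.ne', one_smul]
      rw [hC, Matrix.sub_mul, Matrix.one_mul, h1, hD]
    have hiter : ∀ m : ℕ, D = (∑ k ∈ Finset.range m, C ^ k) + C ^ m * D := by
      intro m
      induction m with
      | zero => simp
      | succ m ih =>
        have : C ^ m * D = C ^ m + C ^ (m + 1) * D := by
          have : C ^ m * (C * D) = C ^ m * D - C ^ m := by
            rw [hCD, Matrix.mul_sub, Matrix.mul_one]
          rw [pow_succ, Matrix.mul_assoc]
          rw [this]
          abel
        rw [Finset.sum_range_succ]
        calc D = (∑ k ∈ Finset.range m, C ^ k) + C ^ m * D := ih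
          _ = (∑ k ∈ Finset.range m, C ^ k) + (C ^ m + C ^ (m+1) * D) := by rw [← this]
          _ = ((∑ k ∈ Finset.range m, C ^ k) + C ^ m) + C ^ (m+1) * D := by abel
    have hbound : ∀ m : ℕ, ∀ a b, (C ^ m) a b ≤ D a b := by
      intro m a b
      have h1 := hiter (m + 1)
      have h2 := congrFun (congrFun h1 a) b
      rw [Matrix.add_apply] at h2
      have hsum : (C ^ m) a b ≤ (∑ k ∈ Finset.range (m+1), C ^ k) a b := by
        have : (∑ k ∈ Finset.range (m+1), C ^ k) a b
            = ∑ k ∈ Finset.range (m+1), (C ^ k) a b := by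
          simp [Matrix.sum_apply]
        rw [this]
        exact Finset.single_le_sum (f := fun k => (C ^ k) a b)
          (fun k _ => hCpow_nonneg k a b) (Finset.self_mem_range_succ m)
      have hprod : 0 ≤ (C ^ (m+1) * D) a b := by
        rw [Matrix.mul_apply]
        exact Finset.sum_nonneg fun k _ =>
          mul_nonneg (hCpow_nonneg (m+1) a k) (hD_nonneg k b)
      linarith [h2 ▸ (le_refl (D a b))]
    -- connected implies some power of C has positive (i,j) entry
    have hCedge : ∀ a b : Fin n, a ≠ b → H a b ≠ 0 → 0 < C a b := by
      intro a b hab hH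
      have h1 := hoff a b hab
      have h2 : H a b < 0 := lt_of_le_of_ne h1 hH
      simp only [hC, Matrix.sub_apply, Matrix.smul_apply, Matrix.one_apply,
        if_neg hab, smul_eq_mul]
      have : s⁻¹ * H a b < 0 := mul_neg_of_pos_of_neg (inv_pos.2 hs_pos) h2
      linarith
    have hpow : ∃ m : ℕ, 0 < (C ^ m) i j := by
      induction hcon with
      | refl => exact ⟨0, by simp [Matrix.one_apply]⟩
      | @tail k l hik hkl ih =>
        obtain ⟨m, hm⟩ := ih
        rcases eq_or_ne k l with rfl | hkl'
        · exact ⟨m, hm⟩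
        · refine ⟨m + 1, ?_⟩
          have hedge := hCedge k l hkl' hkl
          rw [pow_succ, Matrix.mul_apply]
          have hle : (C ^ m) i k * C k l ≤ ∑ t, (C ^ m) i t * C t l :=
            Finset.single_le_sum (f := fun t => (C ^ m) i t * C t l)
              (fun t _ => mul_nonneg (hCpow_nonneg m i t) (hC_nonneg t l))
              (Finset.mem_univ k)
          have := mul_pos hm hedge
          linarith
    obtain ⟨m, hm⟩ := hpow
    have := lt_of_lt_of_le hm (hbound m i j)
    simp only [hD, Matrix.smul_apply, smul_eq_mul] at this
    nlinarith [hs_pos]
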